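/- Let G = (𝒴, E) be an undirected graph without loops on the finite set 𝒴 and let {φ_y : ℝ_{>0}^{b(y)} → ℝ | y ∈ 𝒴} be differentiable convex local potentials. Define the G-local potential φ(f) = Σ_{y∈𝒴} f_y φ_y(f_{b(y)}/f_y) on ℱ = ℝ_{>0}^𝒴. Then for all f, g ∈ ℱ, the Bregman divergence of φ decomposes as D_φ(f, g) = Σ_{y∈𝒴} f_y · D_{φ_y}(f_{b(y)}/f_y, g_{b(y)}/g_y). -/

import Mathlib

open scoped BigOperators

noncomputable def bregman {A : Type*} [Fintype A] [DecidableEq A]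
    (φ : (A → ℝ) → ℝ) (f g : A → ℝ) : ℝ :=
  φ f - φ g - ∑ a, fderiv ℝ φ g (Pi.single a 1) * (f a - g a)

def posOrth (A : Type*) : Set (A → ℝ) := {g | ∀ a, 0 < g a}

def probSet (Y : Type*) [Fintype Y] : Set (Y → ℝ) :=
  {p | (∀ y, 0 < p y) ∧ ∑ y, p y = 1}

noncomputable def DPhi {Y : Type*} [Fintype Y] [DecidableEq Y]
    (G : SimpleGraph Y) [DecidableRel G.Adj] (Y0 : Finset Y)
    (φ : ∀ y : Y, (↥(G.neighborSet y) → ℝ) → ℝ) (f g : Y → ℝ) : ℝ :=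
  ∑ y ∈ Y0, f y * bregman (φ y) (fun z => f z.1 / f y) (fun z => g z.1 / g y)

def nbd {Y : Type*} (G : SimpleGraph Y) (y : Y) : Set Y := insert y (G.neighborSet y)

/-- Graph `G₀` on a vertex subset: edges when closed neighborhoods intersect. -/
def overlapGraph {Y : Type*} (G : SimpleGraph Y) (Y0 : Set Y) : SimpleGraph Y0 where
  Adj a b := a ≠ b ∧ (nbd G a.1 ∩ nbd G b.1).Nonempty
  symm := by
    constructor
    intro a b h
    exact ⟨h.1.symm, by rw [Set.inter_comm]; exact h.2⟩
  loopless := ⟨fun a h => h.1 rfl⟩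

/-- Graph `G₀'` on a vertex subset: edges when open neighborhoods intersect. -/
def bOverlapGraph {Y : Type*} (G : SimpleGraph Y) (Y0 : Set Y) : SimpleGraph Y0 where
  Adj a b := a ≠ b ∧ (G.neighborSet a.1 ∩ G.neighborSet b.1).Nonempty
  symm := by
    constructor
    intro a b h
    exact ⟨h.1.symm, by rw [Set.inter_comm]; exact h.2⟩
  loopless := ⟨fun a h => h.1 rfl⟩

noncomputable def psPot (γ : ℝ) {A : Type*} [Fintype A] (f : A → ℝ) : ℝ :=
  (∑ a, f a ^ (1 + γ)) ^ (1 / (1 + γ))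

lemma isOpen_posOrth' {A : Type*} [Fintype A] : IsOpen (posOrth A) := by
  have : posOrth A = ⋂ a, (fun g : A → ℝ => g a) ⁻¹' Set.Ioi 0 := by
    ext g; simp [posOrth]
  rw [this]
  exact isOpen_iInter_of_finite fun a => (isOpen_Ioi).preimage (continuous_apply a)

lemma clm_sum_single {A : Type*} [Fintype A] [DecidableEq A]
    (L : (A → ℝ) →L[ℝ] ℝ) (v : A → ℝ) :
    ∑ a, L (Pi.single a 1) * v a = L v := by
  have hv : v = ∑ a, v a • (Pi.single a 1 : A → ℝ) := by
    funext b
    simp [Finset.sum_apply, Pi.single_apply]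
  conv_rhs => rw [hv]
  rw [map_sum]
  simp [mul_comm]

theorem stmt7' {Y : Type*} [Fintype Y] [DecidableEq Y]
    (G : SimpleGraph Y) [DecidableRel G.Adj]
    (φ : ∀ y : Y, (↥(G.neighborSet y) → ℝ) → ℝ)
    (hdiff : ∀ y : Y, DifferentiableOn ℝ (φ y) (posOrth ↥(G.neighborSet y)))
    (f g : Y → ℝ) (hf : f ∈ posOrth Y) (hg : g ∈ posOrth Y) :
    bregman (fun h : Y → ℝ => ∑ y : Y, h y * φ y (fun z => h z.1 / h y)) f g
      = ∑ y : Y, f y * bregman (φ y) (fun z => f z.1 / f y) (fun z => g z.1 / g y) := by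
  classical
  have hgne : ∀ y, g y ≠ 0 := fun y => ne_of_gt (hg y)
  have hfne : ∀ y, f y ≠ 0 := fun y => ne_of_gt (hf y)
  -- the ratio points
  set Gp : ∀ y : Y, (↥(G.neighborSet y) → ℝ) := fun y z => g z.1 / g y with hGp
  set Fp : ∀ y : Y, (↥(G.neighborSet y) → ℝ) := fun y z => f z.1 / f y with hFp
  have hGmem : ∀ y, Gp y ∈ posOrth ↥(G.neighborSet y) := fun y z =>
    div_pos (hg z.1) (hg y)
  -- local derivatives
  set D : ∀ y : Y, ((↥(G.neighborSet y) → ℝ) →L[ℝ] ℝ) :=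
    fun y => fderiv ℝ (φ y) (Gp y) with hD
  have hφdiff : ∀ y, HasFDerivAt (φ y) (D y) (Gp y) := by
    intro y
    exact (((hdiff y).differentiableAt (isOpen_posOrth'.mem_nhds (hGmem y)))).hasFDerivAt
  -- derivative of the ratio map h ↦ (h z / h y)_z at g
  set L : ∀ y : Y, ((Y → ℝ) →L[ℝ] (↥(G.neighborSet y) → ℝ)) :=
    fun y => ContinuousLinearMap.pi (fun z : ↥(G.neighborSet y) =>
      g z.1 • ((-((g y) ^ 2)⁻¹) • ContinuousLinearMap.proj (R := ℝ) (φ := fun _ : Y => ℝ) y)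
        + (g y)⁻¹ • ContinuousLinearMap.proj (R := ℝ) (φ := fun _ : Y => ℝ) z.1) with hL
  have hH : ∀ y : Y, HasFDerivAt
      (fun h : Y → ℝ => (fun z : ↥(G.neighborSet y) => h z.1 / h y)) (L y) g := by
    intro y
    have : HasFDerivAt
        (fun h : Y → ℝ => (fun z : ↥(G.neighborSet y) => h z.1 * (h y)⁻¹)) (L y) g := by
      apply hasFDerivAt_pi.2
      intro z
      have hinv : HasFDerivAt (fun h : Y → ℝ => (h y)⁻¹)
          ((-((g y) ^ 2)⁻¹) • ContinuousLinearMap.proj (R := ℝ) (φ := fun _ : Y => ℝ) y) g :=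
        (hasDerivAt_inv (hgne y)).comp_hasFDerivAt g (hasFDerivAt_apply y g)
      exact (hasFDerivAt_apply z.1 g).mul hinv
    simpa [div_eq_mul_inv] using this
  -- derivative of each summand
  set T : ∀ y : Y, ((Y → ℝ) →L[ℝ] ℝ) :=
    fun y => g y • ((D y).comp (L y))
      + φ y (Gp y) • ContinuousLinearMap.proj (R := ℝ) (φ := fun _ : Y => ℝ) y with hT
  have hterm : ∀ y : Y, HasFDerivAt
      (fun h : Y → ℝ => h y * φ y (fun z => h z.1 / h y)) (T y) g := by
    intro y
    have hcomp : HasFDerivAt (fun h : Y → ℝ => φ y (fun z => h z.1 / h y))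
        ((D y).comp (L y)) g := (hφdiff y).comp g (hH y)
    exact (hasFDerivAt_apply y g).mul hcomp
  have hΦ : HasFDerivAt (fun h : Y → ℝ => ∑ y : Y, h y * φ y (fun z => h z.1 / h y))
      (∑ y : Y, T y) g := HasFDerivAt.fun_sum (fun y _ => hterm y)
  have hfd := hΦ.fderiv
  -- rewrite bregman of the global potential
  rw [bregman, hfd]
  have hsum : ∑ a : Y, (∑ y : Y, T y) (Pi.single a 1) * (f a - g a)
      = (∑ y : Y, T y) (f - g) := by
    have := clm_sum_single (∑ y : Y, T y) (f - g)
    simpa using this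
  rw [hsum]
  simp only [ContinuousLinearMap.sum_apply]
  rw [← Finset.sum_sub_distrib, ← Finset.sum_sub_distrib]
  apply Finset.sum_congr rfl
  intro y _
  rw [bregman]
  have hinner : ∑ a, (fderiv ℝ (φ y) (Gp y)) (Pi.single a 1) * (Fp y a - Gp y a)
      = (D y) (Fp y - Gp y) := by
    have := clm_sum_single (D y) (Fp y - Gp y)
    simpa [hD] using this
  have hTv : (T y) (f - g) = g y * (D y) ((L y) (f - g)) + φ y (Gp y) * (f y - g y) := by
    simp [hT, ContinuousLinearMap.add_apply, ContinuousLinearMap.smul_apply,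
      ContinuousLinearMap.comp_apply, ContinuousLinearMap.proj_apply, smul_eq_mul]
  have hkey : g y * (D y) ((L y) (f - g)) = f y * (D y) (Fp y - Gp y) := by
    have harg : g y • (L y) (f - g) = f y • (Fp y - Gp y) := by
      funext z
      simp only [hL, ContinuousLinearMap.pi_apply, ContinuousLinearMap.add_apply,
        ContinuousLinearMap.smul_apply, ContinuousLinearMap.proj_apply, Pi.smul_apply,
        Pi.sub_apply, smul_eq_mul, hFp, hGp]
      field_simp [hfne y, hgne y]
      ring
    calc g y * (D y) ((L y) (f - g)) = (D y) (g y • (L y) (f - g)) := by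
          rw [map_smul]; simp
      _ = (D y) (f y • (Fp y - Gp y)) := by rw [harg]
      _ = f y * (D y) (Fp y - Gp y) := by rw [map_smul]; simp
  rw [hTv, hinner]
  have hFG : (fun z : ↥(G.neighborSet y) => f z.1 / f y) = Fp y := rfl
  have hGG : (fun z : ↥(G.neighborSet y) => g z.1 / g y) = Gp y := rfl
  rw [hFG, hGG, hkey]
  ring


/-- The Bregman divergence of the `G`-local potential
`φ(f) = Σ_y f_y φ_y(f_{b(y)}/f_y)` decomposes into the composite local Bregman divergence:
`D_φ(f, g) = Σ_y f_y D_{φ_y}(f_{b(y)}/f_y, g_{b(y)}/g_y)`. -/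
theorem stmt7 {Y : Type*} [Fintype Y] [DecidableEq Y]
    (G : SimpleGraph Y) [DecidableRel G.Adj]
    (φ : ∀ y : Y, (↥(G.neighborSet y) → ℝ) → ℝ)
    (hconv : ∀ y : Y, ConvexOn ℝ (posOrth ↥(G.neighborSet y)) (φ y))
    (hdiff : ∀ y : Y, DifferentiableOn ℝ (φ y) (posOrth ↥(G.neighborSet y)))
    (f g : Y → ℝ) (hf : f ∈ posOrth Y) (hg : g ∈ posOrth Y) :
    bregman (fun h : Y → ℝ => ∑ y : Y, h y * φ y (fun z => h z.1 / h y)) f g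
      = DPhi G Finset.univ φ f g :=
  stmt7' G φ hdiff f g hf hg
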